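/- For the family Φ_ρ the following hold. (i) If ρ ≤ 0, set γ = ρ/(ρ−1) ∈ [0,1); then lim_{α→∞} Φ'_ρ(α)/α^{γ−1} = (1−γ)^{1−γ}. (ii) For every s > 0, lim_{α→∞} Φ_ρ(αs)/Φ_ρ(α) = 1 if 0 ≤ ρ ≤ 1, and lim_{α→∞} Φ_ρ(αs)/Φ_ρ(α) = s^{ρ/(ρ−1)} if ρ < 0. -/

import Mathlib

open Set Filter Topology

/-- The family `Φ_ρ` of Bernstein penalties induced by the generalized Gamma measure. -/
noncomputable def PhiFam (ρ : ℝ) (s : ℝ) : ℝ :=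
  if ρ = 0 then Real.log (1 + s)
  else if ρ = 1 then 1 - Real.exp (-s)
  else (1 / ρ) * (1 - (1 + (1 - ρ) * s) ^ (-(ρ / (1 - ρ))))

/-- The derivative `Φ'_ρ` of the family `Φ_ρ` on `(0,∞)`. -/
noncomputable def PhiFamDeriv (ρ : ℝ) (s : ℝ) : ℝ :=
  if ρ = 0 then 1 / (1 + s)
  else if ρ = 1 then Real.exp (-s)
  else (1 + (1 - ρ) * s) ^ (-(1 / (1 - ρ)))

/-- `(1 + c α)/α → c` as `α → ∞`. -/
lemma aux_ratio (c : ℝ) : Tendsto (fun α : ℝ => (1 + c * α) / α) atTop (𝓝 c) := by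
  have h : Tendsto (fun α : ℝ => α⁻¹ + c) atTop (𝓝 (0 + c)) :=
    tendsto_inv_atTop_zero.add tendsto_const_nhds
  rw [zero_add] at h
  refine h.congr' ?_
  filter_upwards [eventually_gt_atTop (0:ℝ)] with α hα
  field_simp

/-- `(1 + c α s)/(1 + c α) → s` as `α → ∞`, for `c > 0`. -/
lemma aux_ratio2 (c s : ℝ) (hc : 0 < c) :
    Tendsto (fun α : ℝ => (1 + c * (α * s)) / (1 + c * α)) atTop (𝓝 s) := by
  have h := (aux_ratio (c * s)).div (aux_ratio c) hc.ne'
  have hcs : c * s / c = s := by field_simp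
  rw [hcs] at h
  refine h.congr' ?_
  filter_upwards [eventually_gt_atTop (0:ℝ)] with α hα
  have h1 : (0:ℝ) < 1 + c * α := by positivity
  simp only [Pi.div_apply]
  field_simp

/-- `1 + c α → ∞` for `c > 0`. -/
lemma aux_base_atTop (c : ℝ) (hc : 0 < c) :
    Tendsto (fun α : ℝ => 1 + c * α) atTop atTop :=
  tendsto_atTop_add_const_left _ 1 (tendsto_id.const_mul_atTop hc)

theorem stmt_6 (ρ : ℝ) (hρ : ρ ≤ 1) :
    (ρ ≤ 0 →
      ρ / (ρ - 1) ∈ Set.Ico (0:ℝ) 1 ∧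
      Filter.Tendsto (fun α => PhiFamDeriv ρ α / α ^ (ρ / (ρ - 1) - 1)) Filter.atTop
        (𝓝 ((1 - ρ / (ρ - 1)) ^ (1 - ρ / (ρ - 1))))) ∧
    (∀ s : ℝ, 0 < s →
      (0 ≤ ρ →
        Filter.Tendsto (fun α => PhiFam ρ (α * s) / PhiFam ρ α) Filter.atTop (𝓝 1)) ∧
      (ρ < 0 →
        Filter.Tendsto (fun α => PhiFam ρ (α * s) / PhiFam ρ α) Filter.atTop
          (𝓝 (s ^ (ρ / (ρ - 1)))))) := by
  constructor
  · -- part (i)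
    intro hρ0
    have hρ1 : ρ - 1 < 0 := by linarith
    constructor
    · constructor
      · exact div_nonneg_of_nonpos hρ0 hρ1.le
      · rw [div_lt_one_iff]
        exact Or.inr (Or.inr ⟨hρ1, by linarith⟩)
    · rcases eq_or_lt_of_le hρ0 with h0 | hneg
      · -- ρ = 0
        subst h0
        have htarget : ((1:ℝ) - 0 / (0 - 1)) ^ ((1:ℝ) - 0 / (0 - 1)) = 1 := by
          norm_num
        rw [htarget]
        have h : Tendsto (fun α : ℝ => ((1 + α) / α)⁻¹) atTop (𝓝 1) := by
          have := (aux_ratio 1).inv₀ one_ne_zero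
          simpa using this
        refine h.congr' ?_
        filter_upwards [eventually_gt_atTop (0:ℝ)] with α hα
        have h1 : (0:ℝ) < 1 + α := by linarith
        rw [PhiFamDeriv]
        norm_num
        rw [Real.rpow_neg_one]
        field_simp
      · -- ρ < 0
        have hne0 : ρ ≠ 0 := hneg.ne
        have hne1 : ρ ≠ 1 := by linarith
        set c : ℝ := 1 - ρ with hc
        have hcpos : (0:ℝ) < c := by rw [hc]; linarith
        have hρ1' : ρ - 1 ≠ 0 := by linarith
        have hc' : c ≠ 0 := hcpos.ne'
        have hexp : ρ / (ρ - 1) - 1 = -(1 / c) := by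
          rw [hc]; field_simp; ring
        have htarget : (1 - ρ / (ρ - 1)) = c⁻¹ := by
          rw [hc]; field_simp; ring
        rw [htarget, hexp]
        have hlim : Tendsto (fun α : ℝ => ((1 + c * α) / α) ^ (-(1/c))) atTop
            (𝓝 (c ^ (-(1/c)))) :=
          (aux_ratio c).rpow_const (Or.inl hcpos.ne')
        have heq : c ^ (-(1/c)) = c⁻¹ ^ c⁻¹ := by
          rw [Real.rpow_neg hcpos.le, Real.inv_rpow hcpos.le, one_div]
        rw [← heq]
        refine hlim.congr' ?_
        filter_upwards [eventually_gt_atTop (0:ℝ)] with α hα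
        have h1 : (0:ℝ) < 1 + c * α := by positivity
        rw [PhiFamDeriv, if_neg hne0, if_neg hne1, Real.div_rpow h1.le hα.le]
  · -- part (ii)
    intro s hs
    constructor
    · -- 0 ≤ ρ
      intro hρ0
      rcases eq_or_lt_of_le hρ0 with h0 | hpos
      · -- ρ = 0
        have h0' : ρ = 0 := h0.symm
        subst h0'
        have hlog : Tendsto (fun α : ℝ => Real.log ((1 + α * s) / (1 + α))) atTop
            (𝓝 (Real.log s)) := by
          have hb : Tendsto (fun α : ℝ => (1 + 1 * (α * s)) / (1 + 1 * α)) atTop (𝓝 s) :=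
            aux_ratio2 1 s one_pos
          simp only [one_mul] at hb
          exact (Real.continuousAt_log hs.ne').tendsto.comp hb
        have hlogatTop : Tendsto (fun α : ℝ => Real.log (1 + α)) atTop atTop := by
          have := Real.tendsto_log_atTop.comp (aux_base_atTop 1 one_pos)
          simpa [Function.comp_def] using this
        have h := (hlog.div_atTop hlogatTop).add (tendsto_const_nhds (x := (1:ℝ)))
        rw [zero_add] at h
        refine h.congr' ?_
        filter_upwards [eventually_gt_atTop (0:ℝ)] with α hα
        have h1 : (0:ℝ) < 1 + α := by linarith
        have h2 : (0:ℝ) < 1 + α * s := by positivity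
        have h3 : (1:ℝ) < 1 + α := by linarith
        have hlogne : Real.log (1 + α) ≠ 0 := (Real.log_pos h3).ne'
        rw [PhiFam, PhiFam, if_pos rfl, if_pos rfl]
        rw [Real.log_div h2.ne' h1.ne']
        field_simp
        ring
      · rcases eq_or_lt_of_le hρ with h1 | hlt1
        · -- ρ = 1
          subst h1
          have hexp : ∀ t : ℝ, 0 < t →
              Tendsto (fun α : ℝ => Real.exp (-(α * t))) atTop (𝓝 0) := by
            intro t ht
            have h1 : Tendsto (fun α : ℝ => α * t) atTop atTop :=
              Tendsto.atTop_mul_const ht tendsto_id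
            have h2 : Tendsto (fun α : ℝ => -(α * t)) atTop atBot :=
              tendsto_neg_atTop_atBot.comp h1
            exact Real.tendsto_exp_atBot.comp h2
          have hnum : Tendsto (fun α : ℝ => 1 - Real.exp (-(α * s))) atTop (𝓝 (1 - 0)) :=
            tendsto_const_nhds.sub (hexp s hs)
          have hden : Tendsto (fun α : ℝ => 1 - Real.exp (-(α * 1))) atTop (𝓝 (1 - 0)) :=
            tendsto_const_nhds.sub (hexp 1 one_pos)
          have h := hnum.div hden (by norm_num)
          norm_num at h
          refine h.congr ?_
          intro α
          simp [PhiFam]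
        · -- 0 < ρ < 1
          have hne0 : ρ ≠ 0 := hpos.ne'
          have hne1 : ρ ≠ 1 := hlt1.ne
          set c : ℝ := 1 - ρ with hc
          have hcpos : (0:ℝ) < c := by simp [hc]; linarith
          have hq : (0:ℝ) < ρ / (1 - ρ) := div_pos hpos hcpos
          have hBlim : ∀ t : ℝ, 0 < t →
              Tendsto (fun α : ℝ => (1 + c * (α * t)) ^ (-(ρ / (1 - ρ)))) atTop (𝓝 0) := by
            intro t ht
            have hbase : Tendsto (fun α : ℝ => 1 + c * (α * t)) atTop atTop := by
              have := aux_base_atTop (c * t) (by positivity)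
              refine this.congr ?_
              intro α; ring_nf
            exact (tendsto_rpow_neg_atTop hq).comp hbase
          have hPhi : ∀ t : ℝ, 0 < t →
              Tendsto (fun α : ℝ => PhiFam ρ (α * t)) atTop (𝓝 (1 / ρ)) := by
            intro t ht
            have h := (tendsto_const_nhds (x := (1:ℝ))).sub (hBlim t ht)
            have h2 := h.const_mul (1 / ρ)
            rw [sub_zero, mul_one] at h2
            refine h2.congr ?_
            intro α
            simp [PhiFam, if_neg hne0, if_neg hne1, hc]
          have h := (hPhi s hs).div (hPhi 1 one_pos) (by positivity)
          rw [div_self (by positivity : (1:ℝ)/ρ ≠ 0)] at h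
          refine h.congr ?_
          intro α
          simp
    · -- ρ < 0
      intro hneg
      have hne0 : ρ ≠ 0 := hneg.ne
      have hne1 : ρ ≠ 1 := by linarith
      set c : ℝ := 1 - ρ with hc
      have hcpos : (0:ℝ) < c := by simp [hc]; linarith
      set p : ℝ := -(ρ / (1 - ρ)) with hp
      have hppos : (0:ℝ) < p := by
        rw [hp, neg_pos]
        exact div_neg_of_neg_of_pos hneg hcpos
      have hpeq : p = ρ / (ρ - 1) := by
        rw [hp, ← div_neg, neg_sub]
      set B : ℝ → ℝ := fun t => (1 + c * t) ^ p with hB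
      -- B(α) → ∞
      have hBtop : Tendsto (fun α : ℝ => B α) atTop atTop :=
        (tendsto_rpow_atTop hppos).comp (aux_base_atTop c hcpos)
      have hBinv : Tendsto (fun α : ℝ => (B α)⁻¹) atTop (𝓝 0) :=
        hBtop.inv_tendsto_atTop
      -- B(αs)/B(α) → s^p
      have hBratio : Tendsto (fun α : ℝ => B (α * s) / B α) atTop (𝓝 (s ^ p)) := by
        have h := (aux_ratio2 c s hcpos).rpow_const (p := p) (Or.inl hs.ne')
        refine h.congr' ?_
        filter_upwards [eventually_gt_atTop (0:ℝ)] with α hα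
        have h1 : (0:ℝ) < 1 + c * (α * s) := by positivity
        have h2 : (0:ℝ) < 1 + c * α := by positivity
        rw [Real.div_rpow h1.le h2.le]
      have hmain : Tendsto (fun α : ℝ =>
          (B (α * s) / B α - (B α)⁻¹) / (1 - (B α)⁻¹)) atTop (𝓝 (s ^ p)) := by
        have h := (hBratio.sub hBinv).div
          ((tendsto_const_nhds (x := (1:ℝ))).sub hBinv) (by norm_num)
        rw [sub_zero, sub_zero, div_one] at h
        exact h
      rw [hpeq] at hmain
      refine hmain.congr' ?_
      have hev : ∀ᶠ α : ℝ in atTop, 1 < B α := hBtop.eventually (eventually_gt_atTop 1)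
      filter_upwards [hev, eventually_gt_atTop (0:ℝ)] with α hBα hα
      have hB0 : B α ≠ 0 := by positivity
      have hρinv : (1:ℝ) / ρ ≠ 0 := by
        simp [hne0]
      have hPhival : ∀ t : ℝ, PhiFam ρ t = (1 / ρ) * (1 - B t) := by
        intro t
        simp [PhiFam, if_neg hne0, if_neg hne1, hB, hp, hc]
      rw [hPhival, hPhival, mul_div_mul_left _ _ hρinv]
      have h1Y : 1 - B α ≠ 0 := by intro h; nlinarith
      have key : ∀ X Y : ℝ, Y ≠ 0 → 1 - Y ≠ 0 → (1 - X)/(1 - Y) = (X/Y - Y⁻¹)/(1 - Y⁻¹) := by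
        intro X Y hY h1Y
        have e1 : X / Y - Y⁻¹ = (X - 1) / Y := by rw [inv_eq_one_div, div_sub_div_same]
        have e2 : 1 - Y⁻¹ = (Y - 1) / Y := by
          rw [eq_div_iff hY, sub_mul, one_mul, inv_mul_cancel₀ hY]
        rw [e1, e2, div_div_div_comm, div_self hY, div_one,
          show X - 1 = -(1 - X) by ring, show Y - 1 = -(1 - Y) by ring, neg_div_neg_eq]
      exact (key _ _ hB0 h1Y).symm
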